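/- Let P and Q be probability measures on a measurable space with Q ≪ P, and let T be a measurable map to another measurable space. Then the Kullback–Leibler divergence between the pushforward measures satisfies KL(T_*P, T_*Q) ≤ KL(P, Q). -/

import Mathlib

open MeasureTheory
open scoped ENNReal Classical

/-- The Kullback–Leibler divergence `KL(P,Q) = E_P[log dP/dQ]` when `P ≪ Q` and the
log-likelihood ratio is `P`-integrable, and `+∞` otherwise. -/

noncomputable def klDiv {α : Type*} [MeasurableSpace α] (P Q : Measure α) : ℝ≥0∞ :=
  if P ≪ Q ∧ Integrable (llr P Q) P then ENNReal.ofReal (∫ x, llr P Q x ∂P) else ⊤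

/-- Data-processing inequality for the Kullback–Leibler divergence: for probability
measures `P, Q` with `Q ≪ P` and a measurable map `T`,
`KL(T_*P, T_*Q) ≤ KL(P, Q)`. -/
theorem klDiv_map_le {α β : Type*} [MeasurableSpace α] [MeasurableSpace β]
    (P Q : Measure α) [IsProbabilityMeasure P] [IsProbabilityMeasure Q]
    (hQP : Q ≪ P) (T : α → β) (hT : Measurable T) :
    klDiv (P.map T) (Q.map T) ≤ klDiv P Q := by
  by_cases hc : P ≪ Q ∧ Integrable (llr P Q) P
  swap
  · simp only [klDiv, if_neg hc]; exact le_top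
  obtain ⟨hPQ, hint⟩ := hc
  have hPm : IsProbabilityMeasure (P.map T) := Measure.isProbabilityMeasure_map hT.aemeasurable
  have hQm : IsProbabilityMeasure (Q.map T) := Measure.isProbabilityMeasure_map hT.aemeasurable
  set g : β → ℝ≥0∞ := (P.map T).rnDeriv (Q.map T) with hg_def
  have hg_meas : Measurable g := Measure.measurable_rnDeriv _ _
  have hPQm : P.map T ≪ Q.map T := hPQ.map hT
  have hQPm : Q.map T ≪ P.map T := hQP.map hT
  set φ : α → ℝ := fun x => Real.log (g (T x)).toReal with hφ_def
  set ψ : α → ℝ := fun x => (g (T x) * Q.rnDeriv P x).toReal with hψ_def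
  set χ : α → ℝ := fun x => ((g (T x))⁻¹).toReal with hχ_def
  have hφ_meas : Measurable φ :=
    ((ENNReal.measurable_toReal.comp (hg_meas.comp hT))).log
  -- lintegral bound for ψ
  have hψ_ker : AEMeasurable (fun x => g (T x) * Q.rnDeriv P x) P :=
    ((hg_meas.comp hT).mul (Measure.measurable_rnDeriv Q P)).aemeasurable
  have hψ_lint : ∫⁻ x, g (T x) * Q.rnDeriv P x ∂P ≤ 1 := by
    have h1 : ∫⁻ x, g (T x) * Q.rnDeriv P x ∂P
        = ∫⁻ x, g (T x) ∂(P.withDensity (Q.rnDeriv P)) := by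
      rw [lintegral_withDensity_eq_lintegral_mul₀
        (Measure.measurable_rnDeriv Q P).aemeasurable
        (Measurable.aemeasurable (f := fun x => g (T x)) (hg_meas.comp hT))]
      simp_rw [Pi.mul_apply, mul_comm]
    rw [h1, Measure.withDensity_rnDeriv_eq Q P hQP,
      ← lintegral_map hg_meas hT]
    calc ∫⁻ y, g y ∂(Q.map T) ≤ (P.map T) Set.univ := Measure.lintegral_rnDeriv_le
      _ = 1 := measure_univ
  have hψ_ne_top : ∫⁻ x, g (T x) * Q.rnDeriv P x ∂P ≠ ⊤ :=
    (lt_of_le_of_lt hψ_lint ENNReal.one_lt_top).ne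
  have hψ_int : Integrable ψ P :=
    integrable_toReal_of_lintegral_ne_top hψ_ker hψ_ne_top
  -- lintegral bound for χ
  have hχ_lint : ∫⁻ x, (g (T x))⁻¹ ∂P ≤ 1 := by
    rw [← lintegral_map (f := fun y => (g y)⁻¹) (Measurable.inv hg_meas) hT]
    have h1 : ∫⁻ y, (g y)⁻¹ ∂(P.map T)
        = ∫⁻ y, (Q.map T).rnDeriv (P.map T) y ∂(P.map T) :=
      lintegral_congr_ae (Measure.inv_rnDeriv hPQm)
    rw [h1]
    calc ∫⁻ y, (Q.map T).rnDeriv (P.map T) y ∂(P.map T) ≤ (Q.map T) Set.univ :=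
        Measure.lintegral_rnDeriv_le
      _ = 1 := measure_univ
  have hχ_int : Integrable χ P :=
    integrable_toReal_of_lintegral_ne_top ((hg_meas.comp hT).inv.aemeasurable)
      (lt_of_le_of_lt hχ_lint ENNReal.one_lt_top).ne
  -- a.e. facts
  have h_pos : ∀ᵐ x ∂P, 0 < P.rnDeriv Q x := Measure.rnDeriv_pos hPQ
  have h_fin : ∀ᵐ x ∂P, P.rnDeriv Q x < ⊤ := hPQ.ae_le (Measure.rnDeriv_lt_top P Q)
  have hg_pos : ∀ᵐ x ∂P, 0 < g (T x) :=
    ae_of_ae_map hT.aemeasurable (Measure.rnDeriv_pos hPQm)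
  have hg_fin : ∀ᵐ x ∂P, g (T x) < ⊤ :=
    hPQ.ae_le (ae_of_ae_map hT.aemeasurable (Measure.rnDeriv_lt_top (P.map T) (Q.map T)))
  have h_inv : (P.rnDeriv Q)⁻¹ =ᵐ[P] Q.rnDeriv P := Measure.inv_rnDeriv hPQ
  -- the two key pointwise inequalities
  have h_upper : ∀ᵐ x ∂P, φ x ≤ llr P Q x + (ψ x - 1) := by
    filter_upwards [h_pos, h_fin, hg_pos, hg_fin, h_inv] with x hb_pos hb_fin ha_pos ha_fin hix
    set a : ℝ := (g (T x)).toReal with ha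
    set b : ℝ := (P.rnDeriv Q x).toReal with hb
    have ha0 : 0 < a := ENNReal.toReal_pos ha_pos.ne' ha_fin.ne
    have hb0 : 0 < b := ENNReal.toReal_pos hb_pos.ne' hb_fin.ne
    have hab : 0 < a / b := div_pos ha0 hb0
    have hψx : ψ x = a / b := by
      rw [hψ_def]
      simp only [ENNReal.toReal_mul]
      have : (Q.rnDeriv P x).toReal = b⁻¹ := by
        rw [← hix]; simp [ENNReal.toReal_inv, hb]
      rw [this, div_eq_mul_inv]
    have hlog : Real.log (a / b) ≤ a / b - 1 := Real.log_le_sub_one_of_pos hab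
    rw [Real.log_div ha0.ne' hb0.ne'] at hlog
    have : llr P Q x = Real.log b := rfl
    rw [hφ_def]
    simp only
    rw [this, hψx]
    linarith
  have h_lower : ∀ᵐ x ∂P, 1 - χ x ≤ φ x := by
    filter_upwards [hg_pos, hg_fin] with x ha_pos ha_fin
    set a : ℝ := (g (T x)).toReal with ha
    have ha0 : 0 < a := ENNReal.toReal_pos ha_pos.ne' ha_fin.ne
    have hχx : χ x = a⁻¹ := by rw [hχ_def]; simp [ENNReal.toReal_inv, ha]
    have hlog : Real.log a⁻¹ ≤ a⁻¹ - 1 := Real.log_le_sub_one_of_pos (inv_pos.mpr ha0)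
    rw [Real.log_inv] at hlog
    rw [hχx, hφ_def]
    simp only
    linarith
  -- integrability of φ
  have hφ_int : Integrable φ P := by
    refine integrable_of_le_of_le hφ_meas.aestronglyMeasurable ?_ ?_
      ((integrable_const (1:ℝ)).sub hχ_int) (hint.add (hψ_int.sub (integrable_const 1)))
    · filter_upwards [h_lower] with x hx
      simpa [Pi.sub_apply] using hx
    · filter_upwards [h_upper] with x hx
      simpa [Pi.add_apply, Pi.sub_apply] using hx
  -- integral of ψ is at most 1
  have hψ_integral : ∫ x, ψ x ∂P ≤ 1 := by
    rw [hψ_def, integral_toReal hψ_ker (ae_lt_top' hψ_ker hψ_ne_top)]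
    calc (∫⁻ x, g (T x) * Q.rnDeriv P x ∂P).toReal ≤ (1 : ℝ≥0∞).toReal :=
        ENNReal.toReal_mono ENNReal.one_ne_top hψ_lint
      _ = 1 := by simp
  -- main integral inequality
  have h_main : ∫ x, φ x ∂P ≤ ∫ x, llr P Q x ∂P := by
    have h1 : ∫ x, (φ x - llr P Q x) ∂P ≤ ∫ x, (ψ x - 1) ∂P := by
      refine integral_mono_ae (hφ_int.sub hint) (hψ_int.sub (integrable_const 1)) ?_
      filter_upwards [h_upper] with x hx
      linarith
    rw [integral_sub hφ_int hint, integral_sub hψ_int (integrable_const 1),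
      integral_const] at h1
    simp only [measure_univ, probReal_univ, ENNReal.toReal_one, smul_eq_mul, one_mul, mul_one] at h1
    linarith
  -- llr of the pushforwards
  have h_llr_comp : ∀ x, llr (P.map T) (Q.map T) (T x) = φ x := fun x => rfl
  have h_int_map : Integrable (llr (P.map T) (Q.map T)) (P.map T) := by
    rw [integrable_map_measure (stronglyMeasurable_llr _ _).aestronglyMeasurable
      hT.aemeasurable]
    exact hφ_int.congr (Filter.Eventually.of_forall fun x => (h_llr_comp x).symm)
  have h_int_eq : ∫ y, llr (P.map T) (Q.map T) y ∂(P.map T) = ∫ x, φ x ∂P := by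
    rw [integral_map hT.aemeasurable (stronglyMeasurable_llr _ _).aestronglyMeasurable]
    rfl
  rw [klDiv, klDiv, if_pos ⟨hPQm, h_int_map⟩, if_pos ⟨hPQ, hint⟩]
  exact ENNReal.ofReal_le_ofReal (by rw [h_int_eq]; exact h_main)
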